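/- Let E be a finite-dimensional real normed vector space, λ̄ > 0, 1 < p < ∞ and a ∈ ℝ. Let f : (0, λ̄] → E be continuously differentiable and assume that sup_{0<t≤λ̄} t^{−a+1/p} ‖f(t)‖ < ∞. Then there is a constant C, depending only on a, p and λ̄, such that sup_{0<t≤λ̄} ‖t^{−a+1/p} f(t)‖^p ≤ C ∫₀^{λ̄} ( ‖t^{−a} f(t)‖^p + ‖t^{−a+1} f'(t)‖^p ) dt. -/

import Mathlib

open MeasureTheory Set

lemma aux_add_rpow {X Y p : ℝ} (hX : 0 ≤ X) (hY : 0 ≤ Y) (hp : 0 ≤ p) :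
    (X + Y) ^ p ≤ 2 ^ p * (X ^ p + Y ^ p) := by
  have hm : 0 ≤ max X Y := le_max_of_le_left hX
  calc (X + Y) ^ p ≤ (2 * max X Y) ^ p := by
        apply Real.rpow_le_rpow (by positivity) _ hp
        rcases le_total X Y with h | h
        · rw [max_eq_right h]; linarith
        · rw [max_eq_left h]; linarith
    _ = 2 ^ p * (max X Y) ^ p := Real.mul_rpow (by norm_num) hm
    _ ≤ 2 ^ p * (X ^ p + Y ^ p) := by
        have h1 : (max X Y) ^ p ≤ X ^ p + Y ^ p := by
          rcases le_total X Y with h | h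
          · rw [max_eq_right h]; exact le_add_of_nonneg_left (Real.rpow_nonneg hX p)
          · rw [max_eq_left h]; exact le_add_of_nonneg_right (Real.rpow_nonneg hY p)
        exact mul_le_mul_of_nonneg_left h1 (Real.rpow_nonneg (by norm_num) p)

lemma aux_pow1 {u p a : ℝ} (hu : 0 < u) (hp0 : p ≠ 0) :
    (u ^ (-a + 1/p)) ^ p = u * (u ^ (-a)) ^ p := by
  have h1 : (-a + 1/p) * p = 1 + (-a) * p := by field_simp; ring
  rw [← Real.rpow_mul hu.le, h1, Real.rpow_add hu, Real.rpow_one, Real.rpow_mul hu.le]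

lemma aux_pow2 {t2 u p b : ℝ} (ht2 : 0 < t2) (hu : t2 ≤ u) (hp : 1 < p) :
    t2 ^ (p-1) * (u ^ ((1-p)/p + b)) ^ p ≤ (u ^ b) ^ p := by
  have hu0 : 0 < u := lt_of_lt_of_le ht2 hu
  have hp0 : p ≠ 0 := by positivity
  have h1 : ((1-p)/p + b) * p = (1-p) + b * p := by field_simp
  rw [← Real.rpow_mul hu0.le, h1, Real.rpow_add hu0, ← Real.rpow_mul hu0.le, ← mul_assoc]
  have h2 : t2 ^ (p-1) * u ^ (1-p) ≤ 1 := by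
    have h3 : t2 ^ (p-1) ≤ u ^ (p-1) := Real.rpow_le_rpow ht2.le hu (by linarith)
    have h4 : (0:ℝ) < u ^ (p-1) := Real.rpow_pos_of_pos hu0 _
    calc t2 ^ (p-1) * u ^ (1-p) = t2 ^ (p-1) / u ^ (p-1) := by
          rw [show (1:ℝ)-p = -(p-1) by ring, Real.rpow_neg hu0.le]; ring
      _ ≤ 1 := (div_le_one h4).2 h3
  calc t2 ^ (p-1) * u ^ (1-p) * u ^ (b*p) ≤ 1 * u ^ (b*p) :=
        mul_le_mul_of_nonneg_right h2 (Real.rpow_nonneg hu0.le _)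
    _ = u ^ (b*p) := one_mul _

lemma aux_deriv_bound {u t2 p a N N' : ℝ} (ht2 : 0 < t2) (hu : t2 ≤ u) (hp : 1 < p)
    (hN : 0 ≤ N) (hN' : 0 ≤ N') :
    t2 ^ (p-1) * (|(-a + 1/p)| * u ^ (-a + 1/p - 1) * N + u ^ (-a + 1/p) * N') ^ p
      ≤ 2 ^ p * (1 + |(-a + 1/p)| ^ p) * ((u ^ (-a) * N) ^ p + (u ^ (-a+1) * N') ^ p) := by
  have hu0 : 0 < u := lt_of_lt_of_le ht2 hu
  have hp0 : (0:ℝ) ≤ p := by linarith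
  set c : ℝ := -a + 1/p with hc
  have hX : (0:ℝ) ≤ |c| * u ^ (c-1) * N := by positivity
  have hY : (0:ℝ) ≤ u ^ c * N' := by positivity
  have h1 : (|c| * u ^ (c-1) * N + u ^ c * N') ^ p
      ≤ 2 ^ p * ((|c| * u ^ (c-1) * N) ^ p + (u ^ c * N') ^ p) := aux_add_rpow hX hY hp0
  have hXp : t2 ^ (p-1) * (|c| * u ^ (c-1) * N) ^ p ≤ |c| ^ p * (u ^ (-a) * N) ^ p := by
    rw [mul_assoc, Real.mul_rpow (abs_nonneg c) (by positivity),
        Real.mul_rpow (Real.rpow_nonneg hu0.le _) hN]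
    have hcb : c - 1 = (1-p)/p + (-a) := by rw [hc]; field_simp; ring
    have h2 := aux_pow2 (b := -a) ht2 hu hp
    rw [Real.mul_rpow (Real.rpow_nonneg hu0.le _) hN]
    calc t2 ^ (p-1) * (|c| ^ p * ((u ^ (c-1)) ^ p * N ^ p))
        = |c| ^ p * (t2 ^ (p-1) * (u ^ (c-1)) ^ p * N ^ p) := by ring
      _ ≤ |c| ^ p * ((u ^ (-a)) ^ p * N ^ p) := by
          apply mul_le_mul_of_nonneg_left _ (by positivity)
          apply mul_le_mul_of_nonneg_right _ (Real.rpow_nonneg hN p)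
          rw [hcb]; exact h2
  have hYp : t2 ^ (p-1) * (u ^ c * N') ^ p ≤ (u ^ (-a+1) * N') ^ p := by
    rw [Real.mul_rpow (Real.rpow_nonneg hu0.le _) hN',
        Real.mul_rpow (Real.rpow_nonneg hu0.le _) hN']
    have hcb : c = (1-p)/p + (-a+1) := by rw [hc]; field_simp; ring
    calc t2 ^ (p-1) * ((u ^ c) ^ p * N' ^ p) = t2 ^ (p-1) * (u ^ c) ^ p * N' ^ p := by ring
      _ ≤ (u ^ (-a+1)) ^ p * N' ^ p := by
          apply mul_le_mul_of_nonneg_right _ (Real.rpow_nonneg hN' p)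
          rw [hcb]; exact aux_pow2 ht2 hu hp
  have h2p : (0:ℝ) ≤ 2 ^ p := Real.rpow_nonneg (by norm_num) p
  calc t2 ^ (p-1) * (|c| * u ^ (c-1) * N + u ^ c * N') ^ p
      ≤ t2 ^ (p-1) * (2 ^ p * ((|c| * u ^ (c-1) * N) ^ p + (u ^ c * N') ^ p)) :=
        mul_le_mul_of_nonneg_left h1 (by positivity)
    _ = 2 ^ p * (t2 ^ (p-1) * (|c| * u ^ (c-1) * N) ^ p + t2 ^ (p-1) * (u ^ c * N') ^ p) := by
        ring
    _ ≤ 2 ^ p * (|c| ^ p * (u ^ (-a) * N) ^ p + (u ^ (-a+1) * N') ^ p) := by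
        apply mul_le_mul_of_nonneg_left _ h2p
        exact add_le_add hXp hYp
    _ ≤ 2 ^ p * (1 + |c| ^ p) * ((u ^ (-a) * N) ^ p + (u ^ (-a+1) * N') ^ p) := by
        have a1 : (0:ℝ) ≤ (u ^ (-a) * N) ^ p := Real.rpow_nonneg (by positivity) p
        have a2 : (0:ℝ) ≤ (u ^ (-a+1) * N') ^ p := Real.rpow_nonneg (by positivity) p
        have a3 : (0:ℝ) ≤ |c| ^ p := Real.rpow_nonneg (abs_nonneg c) p
        nlinarith [mul_nonneg h2p a1, mul_nonneg h2p (mul_nonneg a3 a2)]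

theorem weighted_sup_integral_inequality
    {E : Type*} [NormedAddCommGroup E] [NormedSpace ℝ E] [FiniteDimensional ℝ E]
    (lam : ℝ) (hlam : 0 < lam) (p a : ℝ) (hp : 1 < p) :
    ∃ C : ℝ, 0 < C ∧
      ∀ (f f' : ℝ → E),
        (∀ t ∈ Ioc (0 : ℝ) lam, HasDerivWithinAt f (f' t) (Ioc (0 : ℝ) lam) t) →
        ContinuousOn f' (Ioc (0 : ℝ) lam) →
        (∃ M : ℝ, ∀ t ∈ Ioc (0 : ℝ) lam, t ^ (-a + 1 / p) * ‖f t‖ ≤ M) →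
        ∀ t ∈ Ioc (0 : ℝ) lam,
          ENNReal.ofReal ((t ^ (-a + 1 / p) * ‖f t‖) ^ p) ≤
            ENNReal.ofReal C *
              ∫⁻ s in Ioc (0 : ℝ) lam,
                ENNReal.ofReal ((s ^ (-a) * ‖f s‖) ^ p + (s ^ (-a + 1) * ‖f' s‖) ^ p) := by
  have hp0 : (0:ℝ) < p := lt_trans zero_lt_one hp
  set c : ℝ := -a + 1 / p with hc
  have hC : (0:ℝ) < 2 ^ p * (2 + 2 ^ p * (1 + |c| ^ p)) := by positivity
  refine ⟨2 ^ p * (2 + 2 ^ p * (1 + |c| ^ p)), hC, ?_⟩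
  intro f f' hder hf'cont _hM t ht
  obtain ⟨ht0, htlam⟩ := ht
  have hfc : ContinuousOn f (Ioc 0 lam) := fun x hx => (hder x hx).continuousWithinAt
  set G : ℝ → ℝ := fun s => (s ^ (-a) * ‖f s‖) ^ p + (s ^ (-a + 1) * ‖f' s‖) ^ p with hGdef
  have hrpow : ∀ e : ℝ, ContinuousOn (fun u : ℝ => u ^ e) (Ioc (0:ℝ) lam) := fun e x hx =>
    (Real.continuousAt_rpow_const x e (Or.inl (ne_of_gt hx.1))).continuousWithinAt
  have hGcont : ContinuousOn G (Ioc (0:ℝ) lam) := by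
    apply ContinuousOn.add
    · exact ((hrpow (-a)).mul hfc.norm).rpow_const (fun x hx => Or.inr hp0.le)
    · exact ((hrpow (-a+1)).mul hf'cont.norm).rpow_const (fun x hx => Or.inr hp0.le)
  have hGnn : ∀ s ∈ Ioc (0:ℝ) lam, 0 ≤ G s := by
    intro s hs
    have h1 : (0:ℝ) ≤ s ^ (-a) * ‖f s‖ :=
      mul_nonneg (Real.rpow_nonneg hs.1.le _) (norm_nonneg _)
    have h2 : (0:ℝ) ≤ s ^ (-a+1) * ‖f' s‖ :=
      mul_nonneg (Real.rpow_nonneg hs.1.le _) (norm_nonneg _)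
    exact add_nonneg (Real.rpow_nonneg h1 p) (Real.rpow_nonneg h2 p)
  have hglue : (∫⁻ s in Ioc (0:ℝ) lam, ENNReal.ofReal (G s)) =
      ∫⁻ s in Ioc (0:ℝ) lam,
        ENNReal.ofReal ((s ^ (-a) * ‖f s‖) ^ p + (s ^ (-a + 1) * ‖f' s‖) ^ p) := by
    simp only [hGdef]
  rw [← hglue]
  rcases eq_or_ne (∫⁻ s in Ioc (0:ℝ) lam, ENNReal.ofReal (G s)) ⊤ with hJ | hJ
  · rw [hJ, ENNReal.mul_top (ENNReal.ofReal_pos.2 hC).ne']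
    exact le_top
  have hmeasI : MeasurableSet (Ioc (0:ℝ) lam) := measurableSet_Ioc
  have hGm : AEStronglyMeasurable G (volume.restrict (Ioc (0:ℝ) lam)) :=
    hGcont.aestronglyMeasurable hmeasI
  have hGae : ∀ᵐ s ∂(volume.restrict (Ioc (0:ℝ) lam)), 0 ≤ G s :=
    (ae_restrict_iff' hmeasI).2 (Filter.Eventually.of_forall hGnn)
  have hGint : IntegrableOn G (Ioc (0:ℝ) lam) := by
    refine ⟨hGm, ?_⟩
    rw [hasFiniteIntegral_iff_norm]
    have heq : (∫⁻ s in Ioc (0:ℝ) lam, ENNReal.ofReal ‖G s‖) =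
        ∫⁻ s in Ioc (0:ℝ) lam, ENNReal.ofReal (G s) := by
      apply lintegral_congr_ae
      filter_upwards [hGae] with s hs
      rw [Real.norm_of_nonneg hs]
    rw [heq]
    exact lt_of_le_of_ne le_top hJ
  have hIGeq : ENNReal.ofReal (∫ s in Ioc (0:ℝ) lam, G s) =
      ∫⁻ s in Ioc (0:ℝ) lam, ENNReal.ofReal (G s) :=
    ofReal_integral_eq_lintegral_ofReal hGint hGae
  have hIGnn : 0 ≤ ∫ s in Ioc (0:ℝ) lam, G s := setIntegral_nonneg hmeasI hGnn
  -- main real inequality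
  have hreal : (t ^ c * ‖f t‖) ^ p ≤
      2 ^ p * (2 + 2 ^ p * (1 + |c| ^ p)) * ∫ s in Ioc (0:ℝ) lam, G s := by
    set t2 : ℝ := t / 2 with ht2def
    have ht20 : 0 < t2 := by positivity
    have ht2t : t2 < t := by linarith
    have hIccsub : Icc t2 t ⊆ Ioc (0:ℝ) lam := fun x hx =>
      ⟨lt_of_lt_of_le ht20 hx.1, le_trans hx.2 htlam⟩
    have hIocsub : Ioc t2 t ⊆ Ioc (0:ℝ) lam := fun x hx =>
      ⟨lt_trans ht20 hx.1, le_trans hx.2 htlam⟩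
    set g : ℝ → E := fun u => u ^ c • f u with hgdef
    set g' : ℝ → E := fun u => u ^ c • f' u + (c * u ^ (c-1)) • f u with hg'def
    have hgderiv : ∀ u ∈ Ioo (0:ℝ) lam, HasDerivAt g (g' u) u := by
      intro u hu
      have h1 : HasDerivAt f (f' u) u :=
        (hder u (Ioo_subset_Ioc_self hu)).hasDerivAt (Ioc_mem_nhds hu.1 hu.2)
      have h2 : HasDerivAt (fun x : ℝ => x ^ c) (c * u ^ (c-1)) u :=
        Real.hasDerivAt_rpow_const (Or.inl (ne_of_gt hu.1))
      exact h2.smul h1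
    have hgc : ContinuousOn g (Ioc (0:ℝ) lam) := (hrpow c).smul hfc
    have hg'c : ContinuousOn g' (Ioc (0:ℝ) lam) :=
      ((hrpow c).smul hf'cont).add ((continuousOn_const.mul (hrpow (c-1))).smul hfc)
    have hg'int : IntegrableOn g' (Ioc t2 t) :=
      ((hg'c.mono hIccsub).integrableOn_Icc).mono_set Ioc_subset_Icc_self
    have hnormI : IntegrableOn (fun u => ‖g' u‖) (Ioc t2 t) := hg'int.norm
    have key : ∀ s ∈ Icc t2 t, ‖g t‖ ≤ ‖g s‖ + ∫ u in Ioc t2 t, ‖g' u‖ := by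
      intro s hs
      have hst : s ≤ t := hs.2
      have hIcc : Icc s t ⊆ Icc t2 t := Icc_subset_Icc hs.1 le_rfl
      have hftc : ∫ u in s..t, g' u = g t - g s := by
        apply intervalIntegral.integral_eq_sub_of_hasDeriv_right_of_le hst
          (hgc.mono (hIcc.trans hIccsub))
        · intro x hx
          have hx' : x ∈ Ioo (0:ℝ) lam :=
            ⟨lt_of_lt_of_le ht20 (le_trans hs.1 hx.1.le), lt_of_lt_of_le hx.2 htlam⟩
          exact (hgderiv x hx').hasDerivWithinAt
        · exact ((hg'c.mono (hIcc.trans hIccsub)).intervalIntegrable_of_Icc hst)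
      have h1 : ‖g t - g s‖ ≤ ∫ u in Ioc s t, ‖g' u‖ := by
        rw [← hftc]
        calc ‖∫ u in s..t, g' u‖ ≤ ∫ u in s..t, ‖g' u‖ :=
              intervalIntegral.norm_integral_le_integral_norm hst
          _ = ∫ u in Ioc s t, ‖g' u‖ := intervalIntegral.integral_of_le hst
      have h2 : ∫ u in Ioc s t, ‖g' u‖ ≤ ∫ u in Ioc t2 t, ‖g' u‖ :=
        setIntegral_mono_set hnormI
          (Filter.Eventually.of_forall fun u => norm_nonneg _)
          (HasSubset.Subset.eventuallyLE (Ioc_subset_Ioc_left hs.1))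
      have h3 : ‖g t‖ - ‖g s‖ ≤ ‖g t - g s‖ := norm_sub_norm_le _ _
      linarith
    obtain ⟨s, hsmem, hsmin⟩ :=
      isCompact_Icc.exists_isMinOn (nonempty_Icc.2 ht2t.le) ((hgc.mono hIccsub).norm)
    have hgppc : ContinuousOn (fun u => ‖g u‖ ^ p) (Ioc (0:ℝ) lam) :=
      (hgc.norm).rpow_const (fun x hx => Or.inr hp0.le)
    have hgppint : IntegrableOn (fun u => ‖g u‖ ^ p) (Ioc t2 t) :=
      ((hgppc.mono hIccsub).integrableOn_Icc).mono_set Ioc_subset_Icc_self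
    have hvol : (volume (Ioc t2 t)).toReal = t - t2 := by
      rw [Real.volume_Ioc, ENNReal.toReal_ofReal (by linarith)]
    have hmin1 : ‖g s‖ ^ p * (t - t2) ≤ ∫ u in Ioc t2 t, ‖g u‖ ^ p := by
      have hconst : ∫ _u in Ioc t2 t, ‖g s‖ ^ p = (t - t2) * ‖g s‖ ^ p := by
        rw [setIntegral_const, measureReal_def, hvol, smul_eq_mul]
      rw [mul_comm, ← hconst]
      apply setIntegral_mono_on (integrable_const _) hgppint measurableSet_Ioc
      intro u hu
      exact Real.rpow_le_rpow (norm_nonneg _)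
        (isMinOn_iff.1 hsmin u (Ioc_subset_Icc_self hu)) hp0.le
    have hgnorm : ∀ u, 0 < u → ‖g u‖ = u ^ c * ‖f u‖ := by
      intro u hu0
      simp only [hgdef]
      rw [norm_smul, Real.norm_eq_abs, abs_of_nonneg (Real.rpow_nonneg hu0.le _)]
    have hpt : ∀ u ∈ Ioc t2 t, ‖g u‖ ^ p ≤ t * G u := by
      intro u hu
      have hu0 : 0 < u := lt_trans ht20 hu.1
      have haux1 : (u ^ c) ^ p = u * (u ^ (-a)) ^ p := by
        rw [hc]; exact aux_pow1 hu0 (ne_of_gt hp0)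
      have e1 : ‖g u‖ ^ p = u * (u ^ (-a) * ‖f u‖) ^ p := by
        rw [hgnorm u hu0, Real.mul_rpow (Real.rpow_nonneg hu0.le _) (norm_nonneg _),
            Real.mul_rpow (Real.rpow_nonneg hu0.le _) (norm_nonneg _), haux1, mul_assoc]
      rw [e1]
      have h2 : (u ^ (-a) * ‖f u‖) ^ p ≤ G u := by
        simp only [hGdef]
        exact le_add_of_nonneg_right (Real.rpow_nonneg
          (mul_nonneg (Real.rpow_nonneg hu0.le _) (norm_nonneg _)) p)
      have h3 : 0 ≤ (u ^ (-a) * ‖f u‖) ^ p :=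
        Real.rpow_nonneg (mul_nonneg (Real.rpow_nonneg hu0.le _) (norm_nonneg _)) p
      exact mul_le_mul hu.2 h2 h3 (le_trans hu0.le hu.2)
    have hGiocint : IntegrableOn G (Ioc t2 t) := hGint.mono_set hIocsub
    have hsubint : ∫ u in Ioc t2 t, G u ≤ ∫ s in Ioc (0:ℝ) lam, G s :=
      setIntegral_mono_set hGint hGae (HasSubset.Subset.eventuallyLE hIocsub)
    have hmin2 : ∫ u in Ioc t2 t, ‖g u‖ ^ p ≤ t * ∫ s in Ioc (0:ℝ) lam, G s := by
      calc ∫ u in Ioc t2 t, ‖g u‖ ^ p ≤ ∫ u in Ioc t2 t, t * G u :=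
            setIntegral_mono_on hgppint (hGiocint.const_mul t) measurableSet_Ioc hpt
        _ = t * ∫ u in Ioc t2 t, G u := integral_const_mul t _
        _ ≤ t * ∫ s in Ioc (0:ℝ) lam, G s :=
            mul_le_mul_of_nonneg_left hsubint (le_trans ht20.le ht2t.le)
    have hψs : ‖g s‖ ^ p ≤ 2 * ∫ s in Ioc (0:ℝ) lam, G s := by
      have hh := hmin1.trans hmin2
      have ht2' : t - t2 = t / 2 := by rw [ht2def]; ring
      rw [ht2'] at hh
      nlinarith [hh, ht0]
    -- Hölder step
    haveI : IsFiniteMeasure (volume.restrict (Ioc t2 t)) :=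
      ⟨by rw [Measure.restrict_apply_univ]; exact measure_Ioc_lt_top⟩
    have hpq : p.HolderConjugate (p / (p-1)) :=
      (Real.holderConjugate_iff_eq_conjExponent hp).2 rfl
    obtain ⟨B, hB⟩ := isCompact_Icc.exists_bound_of_continuousOn (hg'c.mono hIccsub)
    have hg'meas : AEStronglyMeasurable g' (volume.restrict (Ioc t2 t)) :=
      (hg'c.mono hIocsub).aestronglyMeasurable measurableSet_Ioc
    have hg'mem : MemLp (fun u => ‖g' u‖) (ENNReal.ofReal p) (volume.restrict (Ioc t2 t)) :=
      MemLp.of_bound hg'meas.norm B ((ae_restrict_iff' measurableSet_Ioc).2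
        (Filter.Eventually.of_forall fun u hu => by
          rw [norm_norm]; exact hB u (Ioc_subset_Icc_self hu)))
    have h1mem : MemLp (fun _ : ℝ => (1:ℝ)) (ENNReal.ofReal (p / (p-1)))
        (volume.restrict (Ioc t2 t)) := memLp_const 1
    have hold := integral_mul_norm_le_Lp_mul_Lq hpq hg'mem h1mem
    simp only [norm_norm, norm_one, mul_one, Real.one_rpow] at hold
    rw [integral_const, measureReal_def, smul_eq_mul, mul_one, Measure.restrict_apply_univ, Real.volume_Ioc,
        ENNReal.toReal_ofReal (by linarith)] at hold
    -- hold : ∫ u in Ioc t2 t, ‖g' u‖ ≤ (∫ u in Ioc t2 t, ‖g' u‖^p)^(1/p) * (t - t2)^(1/(p/(p-1)))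
    have hInn : 0 ≤ ∫ u in Ioc t2 t, ‖g' u‖ := setIntegral_nonneg measurableSet_Ioc
      (fun u _ => norm_nonneg _)
    have hAnn : 0 ≤ ∫ u in Ioc t2 t, ‖g' u‖ ^ p := setIntegral_nonneg measurableSet_Ioc
      (fun u _ => Real.rpow_nonneg (norm_nonneg _) p)
    have hIp : (∫ u in Ioc t2 t, ‖g' u‖) ^ p
        ≤ (t - t2) ^ (p-1) * ∫ u in Ioc t2 t, ‖g' u‖ ^ p := by
      calc (∫ u in Ioc t2 t, ‖g' u‖) ^ p
          ≤ ((∫ u in Ioc t2 t, ‖g' u‖ ^ p) ^ (1/p) * (t - t2) ^ (1/(p/(p-1)))) ^ p :=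
            Real.rpow_le_rpow hInn hold hp0.le
        _ = ((∫ u in Ioc t2 t, ‖g' u‖ ^ p) ^ (1/p)) ^ p * ((t - t2) ^ (1/(p/(p-1)))) ^ p :=
            Real.mul_rpow (Real.rpow_nonneg hAnn _) (Real.rpow_nonneg (by linarith) _)
        _ = (∫ u in Ioc t2 t, ‖g' u‖ ^ p) * (t - t2) ^ (p-1) := by
            rw [← Real.rpow_mul hAnn, one_div_mul_cancel (ne_of_gt hp0), Real.rpow_one,
                ← Real.rpow_mul (by linarith : (0:ℝ) ≤ t - t2),
                show 1/(p/(p-1)) * p = p - 1 by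
                  rw [show 1/(p/(p-1)) * p = p / (p/(p-1)) by ring, hpq.div_conj_eq_sub_one]]
        _ = (t - t2) ^ (p-1) * ∫ u in Ioc t2 t, ‖g' u‖ ^ p := mul_comm _ _
    have hgn : ∀ u ∈ Ioc t2 t, ‖g' u‖ ≤ |c| * u ^ (c-1) * ‖f u‖ + u ^ c * ‖f' u‖ := by
      intro u hu
      have hu0 : 0 < u := lt_trans ht20 hu.1
      simp only [hg'def]
      calc ‖u ^ c • f' u + (c * u ^ (c-1)) • f u‖
          ≤ ‖u ^ c • f' u‖ + ‖(c * u ^ (c-1)) • f u‖ := norm_add_le _ _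
        _ = |c| * u ^ (c-1) * ‖f u‖ + u ^ c * ‖f' u‖ := by
            rw [norm_smul, norm_smul, Real.norm_eq_abs, Real.norm_eq_abs, abs_mul,
                abs_of_nonneg (Real.rpow_nonneg hu0.le (c-1)),
                abs_of_nonneg (Real.rpow_nonneg hu0.le c)]
            ring
    have hA2 : (t - t2) ^ (p-1) * ∫ u in Ioc t2 t, ‖g' u‖ ^ p
        ≤ (2 ^ p * (1 + |c| ^ p)) * ∫ s in Ioc (0:ℝ) lam, G s := by
      have ht2eq : t - t2 = t2 := by rw [ht2def]; ring
      have hg'ppint : IntegrableOn (fun u => t2 ^ (p-1) * ‖g' u‖ ^ p) (Ioc t2 t) := by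
        apply Integrable.const_mul
        exact (((hg'c.mono hIccsub).norm.rpow_const
          (fun x hx => Or.inr hp0.le)).integrableOn_Icc).mono_set Ioc_subset_Icc_self
      have hpt2 : ∀ u ∈ Ioc t2 t, t2 ^ (p-1) * ‖g' u‖ ^ p
          ≤ (2 ^ p * (1 + |c| ^ p)) * G u := by
        intro u hu
        have hu0 : 0 < u := lt_trans ht20 hu.1
        have s1 : t2 ^ (p-1) * ‖g' u‖ ^ p
            ≤ t2 ^ (p-1) * (|c| * u ^ (c-1) * ‖f u‖ + u ^ c * ‖f' u‖) ^ p :=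
          mul_le_mul_of_nonneg_left
            (Real.rpow_le_rpow (norm_nonneg _) (hgn u hu) hp0.le)
            (Real.rpow_nonneg ht20.le _)
        refine s1.trans ?_
        have hadb := aux_deriv_bound (u := u) (t2 := t2) (p := p) (a := a)
          (N := ‖f u‖) (N' := ‖f' u‖) ht20 hu.1.le hp (norm_nonneg _) (norm_nonneg _)
        rw [← hc] at hadb
        simp only [hGdef]
        convert hadb using 4
      calc (t - t2) ^ (p-1) * ∫ u in Ioc t2 t, ‖g' u‖ ^ p
          = ∫ u in Ioc t2 t, t2 ^ (p-1) * ‖g' u‖ ^ p := by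
            rw [ht2eq, integral_const_mul]
        _ ≤ ∫ u in Ioc t2 t, (2 ^ p * (1 + |c| ^ p)) * G u :=
            setIntegral_mono_on hg'ppint (hGiocint.const_mul _) measurableSet_Ioc hpt2
        _ = (2 ^ p * (1 + |c| ^ p)) * ∫ u in Ioc t2 t, G u := integral_const_mul _ _
        _ ≤ (2 ^ p * (1 + |c| ^ p)) * ∫ s in Ioc (0:ℝ) lam, G s :=
            mul_le_mul_of_nonneg_left hsubint (by positivity)
    have hIp2 : (∫ u in Ioc t2 t, ‖g' u‖) ^ p
        ≤ (2 ^ p * (1 + |c| ^ p)) * ∫ s in Ioc (0:ℝ) lam, G s := hIp.trans hA2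
    have hkey := key s hsmem
    have hgt : ‖g t‖ = t ^ c * ‖f t‖ := hgnorm t ht0
    rw [← hgt]
    have h1 : ‖g t‖ ^ p ≤ (‖g s‖ + ∫ u in Ioc t2 t, ‖g' u‖) ^ p :=
      Real.rpow_le_rpow (norm_nonneg _) hkey hp0.le
    have h2 : (‖g s‖ + ∫ u in Ioc t2 t, ‖g' u‖) ^ p
        ≤ 2 ^ p * (‖g s‖ ^ p + (∫ u in Ioc t2 t, ‖g' u‖) ^ p) :=
      aux_add_rpow (norm_nonneg _) hInn hp0.le
    have h2pnn : (0:ℝ) ≤ 2 ^ p := Real.rpow_nonneg (by norm_num) p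
    calc ‖g t‖ ^ p ≤ (‖g s‖ + ∫ u in Ioc t2 t, ‖g' u‖) ^ p := h1
      _ ≤ 2 ^ p * (‖g s‖ ^ p + (∫ u in Ioc t2 t, ‖g' u‖) ^ p) := h2
      _ ≤ 2 ^ p * (2 * (∫ s in Ioc (0:ℝ) lam, G s)
            + (2 ^ p * (1 + |c| ^ p)) * ∫ s in Ioc (0:ℝ) lam, G s) :=
          mul_le_mul_of_nonneg_left (add_le_add hψs hIp2) h2pnn
      _ = 2 ^ p * (2 + 2 ^ p * (1 + |c| ^ p)) * ∫ s in Ioc (0:ℝ) lam, G s := by ring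
  calc ENNReal.ofReal ((t ^ c * ‖f t‖) ^ p)
      ≤ ENNReal.ofReal ((2 ^ p * (2 + 2 ^ p * (1 + |c| ^ p))) * ∫ s in Ioc (0:ℝ) lam, G s) :=
        ENNReal.ofReal_le_ofReal hreal
    _ = ENNReal.ofReal (2 ^ p * (2 + 2 ^ p * (1 + |c| ^ p)))
          * ENNReal.ofReal (∫ s in Ioc (0:ℝ) lam, G s) := ENNReal.ofReal_mul hC.le
    _ = ENNReal.ofReal (2 ^ p * (2 + 2 ^ p * (1 + |c| ^ p)))
          * ∫⁻ s in Ioc (0:ℝ) lam, ENNReal.ofReal (G s) := by rw [hIGeq]
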